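/- Let G be a connected simple graph on a finite vertex set V with n = |V| ≥ 2 vertices, and let w : V → ℝ be an arbitrary vector with strictly positive entries; set K = min_{v∈V} w(v) and ‖Dw‖_∞ = max_{u∈V} ∑_{v∈V} d(u,v)·w(v). Then for every function f : V → ℝ with ∑_{v∈V} f(v) = 0, one has (1/2)·∑_{u,v∈V, u∼v} (f(u) − f(v))² ≥ (K/(8·‖Dw‖_∞))·∑_{v∈V} f(v)². -/

import Mathlib

open Finset

private noncomputable def gfun {V : Type*} (f : V → ℝ) : Sym2 V → ℝ :=
  Sym2.lift ⟨fun x y => (f x - f y)^2, fun x y => by ring⟩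

private lemma gfun_mk {V : Type*} (f : V → ℝ) (x y : V) :
    gfun f s(x, y) = (f x - f y)^2 := rfl

private lemma gfun_nonneg {V : Type*} (f : V → ℝ) (e : Sym2 V) : 0 ≤ gfun f e := by
  induction e with
  | _ x y => rw [gfun_mk]; positivity

private lemma walk_bound {V : Type*} {G : SimpleGraph V} (f : V → ℝ) {u v : V}
    (p : G.Walk u v) :
    (f u - f v)^2 ≤ (p.length : ℝ) * (p.edges.map (gfun f)).sum := by
  induction p with
  | nil => simp
  | @cons u b v h q ih =>
    have hS : 0 ≤ (q.edges.map (gfun f)).sum :=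
      List.sum_nonneg (by
        intro x hx
        obtain ⟨e, _, rfl⟩ := List.mem_map.1 hx
        exact gfun_nonneg f e)
    have hL : (0:ℝ) ≤ (q.length : ℝ) := by positivity
    simp only [SimpleGraph.Walk.edges_cons, SimpleGraph.Walk.length_cons, List.map_cons,
      List.sum_cons, Nat.cast_add, Nat.cast_one, gfun_mk]
    set a := f u - f b with ha
    set s := f b - f v with hs
    set L := (q.length : ℝ)
    set S := (q.edges.map (gfun f)).sum
    have key : (f u - f v) = a + s := by rw [ha, hs]; ring
    rw [key]
    rcases eq_or_lt_of_le hL with hL0 | hLpos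
    · have hs0 : s = 0 := by nlinarith [sq_nonneg s]
      rw [hs0]
      nlinarith
    · nlinarith [sq_nonneg (L*a - s), mul_le_mul_of_nonneg_left ih hL, ih, hS]

private lemma pair_bound {V : Type*} [Fintype V] {G : SimpleGraph V} [DecidableRel G.Adj]
    (hG : G.Connected) (f : V → ℝ) (u v : V) :
    (f u - f v)^2 ≤ (G.dist u v : ℝ) * ∑ e ∈ G.edgeFinset, gfun f e := by
  classical
  obtain ⟨p, hp, hlen⟩ := hG.exists_path_of_dist u v
  have h1 := walk_bound f p
  rw [hlen] at h1
  refine h1.trans (mul_le_mul_of_nonneg_left ?_ (by positivity))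
  have h2 : (p.edges.map (gfun f)).sum = ∑ e ∈ p.edges.toFinset, gfun f e :=
    (List.sum_toFinset _ hp.edges_nodup).symm
  rw [h2]
  refine Finset.sum_le_sum_of_subset_of_nonneg ?_ (fun e _ _ => gfun_nonneg f e)
  intro e he
  rw [List.mem_toFinset] at he
  exact SimpleGraph.mem_edgeFinset.2 (p.edges_subset_edgeSet he)

private lemma double_sum_eq {V : Type*} [Fintype V] (G : SimpleGraph V) [DecidableRel G.Adj]
    (f : V → ℝ) :
    ∑ u : V, ∑ v : V, (if G.Adj u v then (f u - f v)^2 else 0)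
      = 2 * ∑ e ∈ G.edgeFinset, gfun f e := by
  classical
  have h1 : ∑ u : V, ∑ v : V, (if G.Adj u v then (f u - f v)^2 else 0)
      = ∑ d : G.Dart, gfun f d.edge := by
    rw [← Finset.sum_product']
    rw [← Finset.sum_filter]
    refine (Finset.sum_bij' (fun (d : G.Dart) (_ : d ∈ univ) => (d.fst, d.snd))
      (fun p hp => (⟨p, (Finset.mem_filter.1 hp).2⟩ : G.Dart)) ?_ ?_ ?_ ?_ ?_).symm
      <;> simp [gfun_mk, SimpleGraph.Dart.edge, Sym2.lift_mk, gfun]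
  have h2 : ∑ d : G.Dart, gfun f d.edge = ∑ e ∈ G.edgeFinset, 2 * gfun f e := by
    rw [← Finset.sum_fiberwise_of_maps_to
      (fun (d : G.Dart) (_ : d ∈ univ) => SimpleGraph.mem_edgeFinset.2 d.edge_mem)
      (fun d => gfun f d.edge)]
    refine Finset.sum_congr rfl fun e he => ?_
    have : ∀ d ∈ Finset.univ.filter (fun d : G.Dart => d.edge = e),
        gfun f d.edge = gfun f e := by
      intro d hd
      rw [(Finset.mem_filter.1 hd).2]
    rw [Finset.sum_congr rfl this, Finset.sum_const, nsmul_eq_mul]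
    congr 1
    have hc := G.dart_edge_fiber_card e (SimpleGraph.mem_edgeFinset.1 he)
    rw [hc]
    norm_num
  rw [h1, h2, ← Finset.mul_sum]


/-- Generalized Lichnerowicz (Theorem 5, second part): for a connected graph `G` on
`n ≥ 2` vertices and an arbitrary strictly positive vector `w` with minimum entry `K`
and `‖Dw‖_∞ = max_u ∑_v d(u,v) w(v)`, every mean-zero function `f` satisfies
`(1/2) ∑_{u ∼ v} (f(u)-f(v))² ≥ (K/(8‖Dw‖_∞)) ∑ f(v)²`. -/
theorem generalized_lichnerowicz {V : Type*} [Fintype V] (G : SimpleGraph V)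
    [DecidableRel G.Adj] (hG : G.Connected) (hn : 2 ≤ Fintype.card V)
    (w : V → ℝ) (hw : ∀ v, 0 < w v)
    (K : ℝ) (hK1 : ∀ v, K ≤ w v) (hK2 : ∃ v, w v = K)
    (M : ℝ) (hM1 : ∀ u : V, ∑ v : V, (G.dist u v : ℝ) * w v ≤ M)
    (hM2 : ∃ u : V, ∑ v : V, (G.dist u v : ℝ) * w v = M) :
    ∀ f : V → ℝ, ∑ v : V, f v = 0 →
      (K / (8 * M)) * ∑ v : V, (f v) ^ 2 ≤
        (1 / 2) * ∑ u : V, ∑ v : V, if G.Adj u v then (f u - f v) ^ 2 else 0 := by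
  intro f hf
  classical
  set Q := ∑ e ∈ G.edgeFinset, gfun f e with hQdef
  have hQ0 : 0 ≤ Q := Finset.sum_nonneg fun e _ => gfun_nonneg f e
  have hK0 : 0 < K := by obtain ⟨v, hv⟩ := hK2; rw [← hv]; exact hw v
  have hM0 : 0 < M := by
    obtain ⟨u, hu⟩ := hM2
    obtain ⟨v, hv⟩ := Fintype.exists_ne_of_one_lt_card (by omega) u
    have hd : 0 < G.dist u v := hG.pos_dist_of_ne (Ne.symm hv)
    rw [← hu]
    have hpos : (0:ℝ) < (G.dist u v : ℝ) * w v :=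
      mul_pos (by exact_mod_cast hd) (hw v)
    exact lt_of_lt_of_le hpos
      (Finset.single_le_sum (f := fun x => (G.dist u x : ℝ) * w x)
        (fun i _ => mul_nonneg (Nat.cast_nonneg _) (hw i).le) (Finset.mem_univ v))
  have hdist : ∀ u : V, K * ∑ v : V, (G.dist u v : ℝ) ≤ M := by
    intro u
    calc K * ∑ v : V, (G.dist u v : ℝ) = ∑ v : V, (G.dist u v : ℝ) * K := by
          rw [Finset.mul_sum]; exact Finset.sum_congr rfl fun v _ => by ring
      _ ≤ ∑ v : V, (G.dist u v : ℝ) * w v :=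
          Finset.sum_le_sum fun v _ => mul_le_mul_of_nonneg_left (hK1 v) (Nat.cast_nonneg _)
      _ ≤ M := hM1 u
  have hn0 : (0:ℝ) < (Fintype.card V : ℝ) := by
    have : 0 < Fintype.card V := by omega
    exact_mod_cast this
  have key : ∀ u : V, K * ((Fintype.card V : ℝ) * (f u)^2) ≤ M * Q := by
    intro u
    have c1 : ((Fintype.card V : ℝ) * f u)^2
        ≤ (Fintype.card V : ℝ) * ∑ v : V, (f u - f v)^2 := by
      have h := sq_sum_le_card_mul_sum_sq (s := (Finset.univ : Finset V))
        (f := fun v => f u - f v)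
      have hsum : ∑ v : V, (f u - f v) = (Fintype.card V : ℝ) * f u := by
        rw [Finset.sum_sub_distrib, hf, sub_zero, Finset.sum_const, Finset.card_univ,
          nsmul_eq_mul]
      rw [hsum] at h
      simpa [Finset.card_univ] using h
    have c2 : ∑ v : V, (f u - f v)^2 ≤ (∑ v : V, (G.dist u v : ℝ)) * Q := by
      rw [Finset.sum_mul]
      exact Finset.sum_le_sum fun v _ => pair_bound hG f u v
    have c4 : (Fintype.card V:ℝ) * (f u)^2 ≤ (∑ v : V, (G.dist u v:ℝ)) * Q := by
      refine le_of_mul_le_mul_left ?_ hn0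
      calc (Fintype.card V:ℝ) * ((Fintype.card V:ℝ) * f u ^2)
          = ((Fintype.card V:ℝ) * f u)^2 := by ring
        _ ≤ (Fintype.card V:ℝ) * ∑ v : V, (f u - f v)^2 := c1
        _ ≤ (Fintype.card V:ℝ) * ((∑ v : V, (G.dist u v:ℝ)) * Q) :=
            mul_le_mul_of_nonneg_left c2 hn0.le
    calc K * ((Fintype.card V:ℝ) * f u^2)
        ≤ K * ((∑ v : V, (G.dist u v:ℝ)) * Q) := mul_le_mul_of_nonneg_left c4 hK0.le
      _ = (K * ∑ v : V, (G.dist u v:ℝ)) * Q := by ring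
      _ ≤ M * Q := mul_le_mul_of_nonneg_right (hdist u) hQ0
  have hS : K * ∑ v : V, (f v)^2 ≤ M * Q := by
    refine le_of_mul_le_mul_left ?_ hn0
    calc (Fintype.card V:ℝ) * (K * ∑ v : V, (f v)^2)
        = ∑ v : V, K * ((Fintype.card V:ℝ) * f v ^2) := by
          simp only [Finset.mul_sum]
          exact Finset.sum_congr rfl fun v _ => by ring
      _ ≤ ∑ _u : V, M * Q := Finset.sum_le_sum fun u _ => key u
      _ = (Fintype.card V:ℝ) * (M * Q) := by
          rw [Finset.sum_const, Finset.card_univ, nsmul_eq_mul]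
  rw [double_sum_eq]
  rw [div_mul_eq_mul_div, div_le_iff₀ (by positivity : (0:ℝ) < 8*M)]
  nlinarith [hS, mul_nonneg hM0.le hQ0]
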